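/- Let S be a finite set, Q : S × S → ℝ a CTMC generator matrix (nonnegative off-diagonal entries, rows summing to zero), and π_0 a probability distribution on S. For a subset S' ⊆ S, let Q_{S'} denote the principal submatrix of Q indexed by S' and let π_0^{S'} denote the restriction of π_0 to S'. Then for any nested subsets S_1 ⊆ S_2 ⊆ S and every t ≥ 0 and every s ∈ S_1, the truncated transient probabilities are monotone: ((π_0^{S_1})ᵀ e^{t Q_{S_1}})_s ≤ ((π_0^{S_2})ᵀ e^{t Q_{S_2}})_s ≤ (π_0ᵀ e^{tQ})_s. -/

import Mathlib

open NormedSpace Matrix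

section Aux

variable {α β : Type*} [Fintype α] [DecidableEq α] [Fintype β] [DecidableEq β]

private lemma pow_entry_nonneg (A : Matrix β β ℝ) (hA : ∀ i j, 0 ≤ A i j) (n : ℕ) :
    ∀ i j, 0 ≤ (A ^ n) i j := by
  induction n with
  | zero =>
    intro i j
    rw [pow_zero, Matrix.one_apply]
    split <;> norm_num
  | succ n ih =>
    intro i j
    rw [pow_succ, Matrix.mul_apply]
    exact Finset.sum_nonneg fun k _ => mul_nonneg (ih i k) (hA k j)

private lemma pow_submatrix_le (f : α → β) (hf : Function.Injective f)
    (A : Matrix β β ℝ) (hA : ∀ i j, 0 ≤ A i j) (n : ℕ) :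
    ∀ i j, ((A.submatrix f f) ^ n) i j ≤ (A ^ n) (f i) (f j) := by
  induction n with
  | zero =>
    intro i j
    rw [pow_zero, pow_zero, Matrix.one_apply, Matrix.one_apply]
    by_cases h : i = j
    · simp [h]
    · simp [h, hf.ne h]
  | succ n ih =>
    intro i j
    rw [pow_succ, pow_succ, Matrix.mul_apply, Matrix.mul_apply]
    have hBpow : ∀ k, 0 ≤ ((A.submatrix f f) ^ n) i k :=
      fun k => pow_entry_nonneg _ (fun a b => hA (f a) (f b)) n i k
    calc ∑ k, ((A.submatrix f f) ^ n) i k * (A.submatrix f f) k j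
        ≤ ∑ k, (A ^ n) (f i) (f k) * A (f k) (f j) := by
          refine Finset.sum_le_sum fun k _ => ?_
          exact mul_le_mul_of_nonneg_right (ih i k) (hA (f k) (f j))
      _ = ∑ k ∈ Finset.univ.image f, (A ^ n) (f i) k * A k (f j) := by
          rw [Finset.sum_image fun a _ b _ h => hf h]
      _ ≤ ∑ k, (A ^ n) (f i) k * A k (f j) := by
          refine Finset.sum_le_sum_of_subset_of_nonneg (Finset.subset_univ _) ?_
          exact fun k _ _ => mul_nonneg (pow_entry_nonneg A hA n _ _) (hA _ _)

/-- entry of the matrix exponential as a tsum -/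
private lemma exp_entry_eq (M : Matrix β β ℝ) (i j : β) :
    exp M i j = ∑' n : ℕ, ((n.factorial : ℝ)⁻¹ * (M ^ n) i j) := by
  letI : SeminormedRing (Matrix β β ℝ) := Matrix.linftyOpSemiNormedRing
  letI : NormedRing (Matrix β β ℝ) := Matrix.linftyOpNormedRing
  letI : NormedAlgebra ℝ (Matrix β β ℝ) := Matrix.linftyOpNormedAlgebra
  have hsum : Summable fun n : ℕ => ((n.factorial : ℝ)⁻¹ : ℝ) • M ^ n := expSeries_summable' M
  have hE : Continuous (Matrix.entryLinearMap ℝ ℝ i j : Matrix β β ℝ →ₗ[ℝ] ℝ) :=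
    LinearMap.continuous_of_finiteDimensional _
  have hmap := (hsum.hasSum.map (Matrix.entryLinearMap ℝ ℝ i j) hE).tsum_eq
  have h1 : exp M = ∑' n : ℕ, ((n.factorial : ℝ)⁻¹ : ℝ) • M ^ n := by
    rw [exp_eq_tsum ℝ]
  have h2 : (∑' n : ℕ, ((n.factorial : ℝ)⁻¹ : ℝ) • M ^ n) i j
      = Matrix.entryLinearMap ℝ ℝ i j (∑' n : ℕ, ((n.factorial : ℝ)⁻¹ : ℝ) • M ^ n) := rfl
  rw [h1, h2, ← hmap]
  exact tsum_congr fun n => by simp [smul_eq_mul]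

private lemma exp_entry_summable (M : Matrix β β ℝ) (i j : β) :
    Summable fun n : ℕ => ((n.factorial : ℝ)⁻¹ * (M ^ n) i j) := by
  letI : SeminormedRing (Matrix β β ℝ) := Matrix.linftyOpSemiNormedRing
  letI : NormedRing (Matrix β β ℝ) := Matrix.linftyOpNormedRing
  letI : NormedAlgebra ℝ (Matrix β β ℝ) := Matrix.linftyOpNormedAlgebra
  have hsum : Summable fun n : ℕ => ((n.factorial : ℝ)⁻¹ : ℝ) • M ^ n := expSeries_summable' M
  have hE : Continuous (Matrix.entryLinearMap ℝ ℝ i j : Matrix β β ℝ →ₗ[ℝ] ℝ) :=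
    LinearMap.continuous_of_finiteDimensional _
  have h := (hsum.hasSum.map (Matrix.entryLinearMap ℝ ℝ i j) hE).summable
  exact h.congr fun n => by simp [smul_eq_mul]

private lemma exp_entry_nonneg (M : Matrix β β ℝ) (hM : ∀ i j, 0 ≤ M i j) (i j : β) :
    0 ≤ exp M i j := by
  rw [exp_entry_eq]
  exact tsum_nonneg fun n =>
    mul_nonneg (inv_nonneg.mpr (Nat.cast_nonneg _)) (pow_entry_nonneg M hM n i j)

private lemma exp_submatrix_le (f : α → β) (hf : Function.Injective f)
    (A : Matrix β β ℝ) (hA : ∀ i j, 0 ≤ A i j) (i j : α) :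
    exp (A.submatrix f f) i j ≤ exp A (f i) (f j) := by
  rw [exp_entry_eq, exp_entry_eq]
  refine Summable.tsum_le_tsum (fun n => ?_) (exp_entry_summable _ i j) (exp_entry_summable _ _ _)
  exact mul_le_mul_of_nonneg_left (pow_submatrix_le f hf A hA n i j) (inv_nonneg.mpr (Nat.cast_nonneg _))

private lemma exp_smul_one (r : ℝ) :
    exp (r • (1 : Matrix β β ℝ)) = Real.exp r • (1 : Matrix β β ℝ) := by
  have h1 : r • (1 : Matrix β β ℝ) = algebraMap ℝ (Matrix β β ℝ) r := by
    simp [Algebra.algebraMap_eq_smul_one]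
  letI : SeminormedRing (Matrix β β ℝ) := Matrix.linftyOpSemiNormedRing
  letI : NormedRing (Matrix β β ℝ) := Matrix.linftyOpNormedRing
  letI : NormedAlgebra ℝ (Matrix β β ℝ) := Matrix.linftyOpNormedAlgebra
  rw [h1]
  have h2 := algebraMap_exp_comm (𝕂 := ℝ) (𝔸 := Matrix β β ℝ) r
  rw [← Real.exp_eq_exp_ℝ] at h2
  rw [Algebra.algebraMap_eq_smul_one] at h2
  exact h2.symm

/-- Key lemma: monotonicity of truncated transient probabilities under an
injective embedding of state spaces. -/
private lemma fsp_key (f : α → β) (hf : Function.Injective f)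
    (Q : Matrix β β ℝ) (hQ : ∀ i j, i ≠ j → 0 ≤ Q i j)
    (π : β → ℝ) (hπ : ∀ i, 0 ≤ π i) (t : ℝ) (ht : 0 ≤ t) (j : α) :
    Matrix.vecMul (fun a => π (f a)) (exp (t • Q.submatrix f f)) j ≤
      Matrix.vecMul π (exp (t • Q)) (f j) := by
  classical
  set c : ℝ := ∑ i, |Q i i| with hc
  have hcb : ∀ i : β, 0 ≤ Q i i + c := by
    intro i
    have h1 : |Q i i| ≤ c := Finset.single_le_sum (fun i _ => abs_nonneg (Q i i))
      (Finset.mem_univ i)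
    have := neg_abs_le (Q i i)
    linarith
  set A : Matrix β β ℝ := Q + c • (1 : Matrix β β ℝ) with hA
  have hAnn : ∀ i j, 0 ≤ A i j := by
    intro i j
    by_cases h : i = j
    · subst h; simpa [hA, Matrix.one_apply] using hcb i
    · simpa [hA, Matrix.one_apply, h] using hQ i j h
  have htAnn : ∀ i j, 0 ≤ (t • A) i j := fun i j => by
    simpa using mul_nonneg ht (hAnn i j)
  -- decompose exp (t • Q)
  have hcomm : Commute ((-(t * c)) • (1 : Matrix β β ℝ)) (t • A) := by
    exact (Commute.one_left (t • A)).smul_left _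
  have hdecomp : exp (t • Q) = Real.exp (-(t * c)) • exp (t • A) := by
    have : t • Q = (-(t * c)) • (1 : Matrix β β ℝ) + t • A := by
      rw [hA]; rw [smul_add, smul_smul]; module
    rw [this, Matrix.exp_add_of_commute _ _ hcomm, exp_smul_one, Matrix.smul_mul, one_mul]
  -- the same for the submatrix
  have hsub1 : (1 : Matrix β β ℝ).submatrix f f = (1 : Matrix α α ℝ) := by
    ext i j
    by_cases h : i = j
    · simp [h, Matrix.one_apply]
    · simp [Matrix.submatrix_apply, Matrix.one_apply, h, hf.ne h]
  have hAsub : A.submatrix f f = Q.submatrix f f + c • (1 : Matrix α α ℝ) := by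
    ext i j
    by_cases h : i = j
    · simp [hA, h, Matrix.one_apply]
    · simp [hA, Matrix.one_apply, h, hf.ne h]
  have hcomm' : Commute ((-(t * c)) • (1 : Matrix α α ℝ)) (t • A.submatrix f f) :=
    (Commute.one_left _).smul_left _
  have hdecomp' : exp (t • Q.submatrix f f) =
      Real.exp (-(t * c)) • exp (t • A.submatrix f f) := by
    have : t • Q.submatrix f f = (-(t * c)) • (1 : Matrix α α ℝ) + t • A.submatrix f f := by
      rw [hAsub]; rw [smul_add, smul_smul]; module
    rw [this, Matrix.exp_add_of_commute _ _ hcomm', exp_smul_one, Matrix.smul_mul, one_mul]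
  have hsmul : t • A.submatrix f f = (t • A).submatrix f f := by
    ext i j; simp
  rw [hdecomp, hdecomp', hsmul]
  have he : (0:ℝ) ≤ Real.exp (-(t * c)) := (Real.exp_pos _).le
  simp only [Matrix.vecMul, dotProduct, Matrix.smul_apply, smul_eq_mul]
  calc ∑ a, π (f a) * (Real.exp (-(t * c)) * exp ((t • A).submatrix f f) a j)
      ≤ ∑ a, π (f a) * (Real.exp (-(t * c)) * exp (t • A) (f a) (f j)) :=
        Finset.sum_le_sum fun a _ =>
          mul_le_mul_of_nonneg_left
            (mul_le_mul_of_nonneg_left (exp_submatrix_le f hf _ htAnn a j) he) (hπ _)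
    _ = ∑ b ∈ Finset.univ.image f, π b * (Real.exp (-(t * c)) * exp (t • A) b (f j)) := by
        rw [Finset.sum_image fun a _ b _ h => hf h]
    _ ≤ ∑ b, π b * (Real.exp (-(t * c)) * exp (t • A) b (f j)) :=
        Finset.sum_le_sum_of_subset_of_nonneg (Finset.subset_univ _)
          (fun b _ _ => mul_nonneg (hπ b) (mul_nonneg he (exp_entry_nonneg _ htAnn b (f j))))

end Aux

/-- Finite state projection monotonicity: for nested subsets
`S₁ ⊆ S₂ ⊆ S`, the truncated transient probabilities at any time `t ≥ 0` and any
state `s ∈ S₁` are monotone in the truncation and never exceed the true transient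
probability. -/
theorem fsp_monotone
    {S : Type*} [Fintype S] [DecidableEq S]
    (Q : Matrix S S ℝ)
    (hQoff : ∀ s s', s ≠ s' → 0 ≤ Q s s')
    (hQrow : ∀ s, ∑ s', Q s s' = 0)
    (π₀ : S → ℝ) (hπ₀nonneg : ∀ s, 0 ≤ π₀ s) (hπ₀sum : ∑ s, π₀ s = 1)
    (S₁ S₂ : Finset S) (h12 : S₁ ⊆ S₂)
    (t : ℝ) (ht : 0 ≤ t) (s : S) (hs : s ∈ S₁) :
    Matrix.vecMul (fun a : {x : S // x ∈ S₁} => π₀ a)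
        (NormedSpace.exp (t • Matrix.of fun a b : {x : S // x ∈ S₁} => Q a b))
        ⟨s, hs⟩ ≤
      Matrix.vecMul (fun a : {x : S // x ∈ S₂} => π₀ a)
        (NormedSpace.exp (t • Matrix.of fun a b : {x : S // x ∈ S₂} => Q a b))
        ⟨s, h12 hs⟩ ∧
    Matrix.vecMul (fun a : {x : S // x ∈ S₂} => π₀ a)
        (NormedSpace.exp (t • Matrix.of fun a b : {x : S // x ∈ S₂} => Q a b))
        ⟨s, h12 hs⟩ ≤
      Matrix.vecMul π₀ (NormedSpace.exp (t • Q)) s := by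
  constructor
  · have hf : Function.Injective (fun a : {x : S // x ∈ S₁} => (⟨a.1, h12 a.2⟩ : {x : S // x ∈ S₂})) :=
      fun a b h => Subtype.ext (by simpa using congrArg Subtype.val h)
    have hQ₂ : ∀ i j : {x : S // x ∈ S₂}, i ≠ j →
        0 ≤ (Matrix.of fun a b : {x : S // x ∈ S₂} => Q a b) i j :=
      fun i j h => hQoff i j fun e => h (Subtype.ext e)
    exact fsp_key _ hf (Matrix.of fun a b : {x : S // x ∈ S₂} => Q a b) hQ₂
      (fun b => π₀ b) (fun b => hπ₀nonneg b) t ht ⟨s, hs⟩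
  · have hf : Function.Injective (Subtype.val : {x : S // x ∈ S₂} → S) :=
      Subtype.val_injective
    have key := fsp_key Subtype.val hf Q hQoff π₀ hπ₀nonneg t ht
      (⟨s, h12 hs⟩ : {x : S // x ∈ S₂})
    exact key
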